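/- Let G be a group acting on a Boolean algebra 𝒜 of subsets of G by left translation, and suppose 𝒜 is d-closed. If S is a subgroup of (S(𝒜), *), then all endomorphisms d_p for p ∈ S have the same kernel: Ker d_p = Ker d_q for all p, q ∈ S. -/
import Mathlib


open Set

/-- Left translate of a set: \$gA = \{g·a : a ∈ A\}\$. -/
def trL {G : Type*} [Group G] (g : G) (A : Set G) : Set G := (fun x => g * x) '' A

/-- A \$G\$-algebra: a Boolean algebra of subsets of \$G\$ closed under left translation. -/
def IsGAlgebra {G : Type*} [Group G] (𝒜 : Set (Set G)) : Prop :=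
  ∅ ∈ 𝒜 ∧ (∀ A ∈ 𝒜, Aᶜ ∈ 𝒜) ∧ (∀ A ∈ 𝒜, ∀ B ∈ 𝒜, A ∪ B ∈ 𝒜) ∧
    ∀ g : G, ∀ A ∈ 𝒜, trL g A ∈ 𝒜

/-- An ultrafilter on the Boolean algebra 𝒜 of subsets of \$G\$. -/
def IsUltra {G : Type*} [Group G] (𝒜 p : Set (Set G)) : Prop :=
  p ⊆ 𝒜 ∧ ∅ ∉ p ∧ univ ∈ p ∧ (∀ A ∈ p, ∀ B ∈ p, A ∩ B ∈ p) ∧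
    (∀ A ∈ p, ∀ B ∈ 𝒜, A ⊆ B → B ∈ p) ∧ ∀ A ∈ 𝒜, A ∈ p ∨ Aᶜ ∈ p

/-- The map \$d_p(A) = \{g ∈ G : g⁻¹A ∈ p\}\$. -/
def dmap {G : Type*} [Group G] (p : Set (Set G)) (A : Set G) : Set G :=
  {g : G | trL g⁻¹ A ∈ p}

/-- 𝒜 is d-closed: closed under \$d_p\$ for every ultrafilter \$p\$ on 𝒜. -/
def DClosed {G : Type*} [Group G] (𝒜 : Set (Set G)) : Prop :=
  ∀ p : Set (Set G), IsUltra 𝒜 p → ∀ A ∈ 𝒜, dmap p A ∈ 𝒜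

/-- The semigroup operation on ultrafilters: \$A ∈ p*q\$ iff \$A ∈ 𝒜\$ and \$d_q(A) ∈ p\$. -/
def ustar {G : Type*} [Group G] (𝒜 p q : Set (Set G)) : Set (Set G) :=
  {A | A ∈ 𝒜 ∧ dmap q A ∈ p}

lemma mem_trL {G : Type*} [Group G] (g : G) (A : Set G) (x : G) :
    x ∈ trL g A ↔ g⁻¹ * x ∈ A := by
  constructor
  · rintro ⟨a, ha, rfl⟩; simpa using ha
  · intro h; exact ⟨g⁻¹ * x, h, by group⟩

lemma trL_trL {G : Type*} [Group G] (g h : G) (A : Set G) :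
    trL g (trL h A) = trL (g * h) A := by
  ext x; simp [mem_trL, mul_assoc]

lemma dmap_empty {G : Type*} [Group G] {p : Set (Set G)} (hp : ∅ ∉ p) :
    dmap p (∅ : Set G) = ∅ := by
  ext g
  simp only [dmap, mem_setOf_eq, mem_empty_iff_false, iff_false]
  have : trL g⁻¹ (∅ : Set G) = ∅ := by simp [trL]
  rw [this]; exact hp

lemma dmap_ustar {G : Type*} [Group G] (𝒜 p q : Set (Set G))
    (h𝒜 : ∀ g : G, ∀ A ∈ 𝒜, trL g A ∈ 𝒜) (A : Set G) (hA : A ∈ 𝒜) :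
    dmap (ustar 𝒜 p q) A = dmap p (dmap q A) := by
  ext g
  have h1 : trL g⁻¹ A ∈ 𝒜 := h𝒜 _ _ hA
  have h2 : dmap q (trL g⁻¹ A) = trL g⁻¹ (dmap q A) := by
    ext x
    simp only [dmap, mem_trL, mem_setOf_eq, trL_trL]
    rw [show (g⁻¹⁻¹ * x)⁻¹ = x⁻¹ * g⁻¹ by simp [mul_inv_rev]]
  show (trL g⁻¹ A ∈ 𝒜 ∧ dmap q (trL g⁻¹ A) ∈ p) ↔ trL g⁻¹ (dmap q A) ∈ p
  rw [h2]
  exact ⟨fun h => h.2, fun h => ⟨h1, h⟩⟩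

/-- If $S$ is a subgroup of the semigroup $(S(𝒜), *)$ of ultrafilters on a d-closed
$G$-algebra 𝒜, then all the endomorphisms $d_p$, $p ∈ S$, have the same kernel. -/
theorem common_kernel_of_subgroup {G : Type*} [Group G]
    (𝒜 : Set (Set G)) (h𝒜 : IsGAlgebra 𝒜) (hd : DClosed 𝒜)
    (S : Set (Set (Set G)))
    (hSu : ∀ p ∈ S, IsUltra 𝒜 p)
    (hSmul : ∀ p ∈ S, ∀ q ∈ S, ustar 𝒜 p q ∈ S)
    (hSgrp : ∃ u ∈ S, (∀ p ∈ S, ustar 𝒜 u p = p ∧ ustar 𝒜 p u = p) ∧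
      ∀ p ∈ S, ∃ q ∈ S, ustar 𝒜 p q = u ∧ ustar 𝒜 q p = u)
    (p q : Set (Set G)) (hp : p ∈ S) (hq : q ∈ S) :
    {A | A ∈ 𝒜 ∧ dmap p A = ∅} = {A | A ∈ 𝒜 ∧ dmap q A = ∅} := by
  obtain ⟨u, huS, hid, hinv⟩ := hSgrp
  have htr : ∀ g : G, ∀ A ∈ 𝒜, trL g A ∈ 𝒜 := h𝒜.2.2.2
  have key : ∀ r ∈ S, {A | A ∈ 𝒜 ∧ dmap r A = ∅} = {A | A ∈ 𝒜 ∧ dmap u A = ∅} := by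
    intro r hr
    ext A
    simp only [mem_setOf_eq]
    constructor
    · rintro ⟨hA, hker⟩
      obtain ⟨r', hr'S, -, hr'r⟩ := hinv r hr
      refine ⟨hA, ?_⟩
      rw [← hr'r, dmap_ustar 𝒜 r' r htr A hA, hker,
        dmap_empty (hSu r' hr'S).2.1]
    · rintro ⟨hA, hker⟩
      refine ⟨hA, ?_⟩
      rw [← (hid r hr).2, dmap_ustar 𝒜 r u htr A hA, hker,
        dmap_empty (hSu r hr).2.1]
  rw [key p hp, key q hq]
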